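/- arXiv:1504.03448 — 6 statements merged into one kernel-verified Lean document; each statement's English description precedes it below -/
import Mathlib

section
/- The affine geometric R-matrix is an involution: if R(a,b) = (b',a') then R(b',a') = (a,b), provided all relevant energies are nonzero. -/
/-- Cyclic shift of a vector (indexed `0,…,n-1`) by `i`. -/
noncomputable def cshift (n : ℕ) (a : ℕ → ℂ) (i : ℕ) : ℕ → ℂ := fun j => a ((j + i) % n)

/-- The energy `E(a,b) = ∑_{i=0}^{n-1} (∏_{j=1}^{i} b_j)(∏_{j=i+2}^{n} a_j)`. -/
noncomputable def energy (n : ℕ) (a b : ℕ → ℂ) : ℂ :=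
  ∑ i ∈ Finset.range n, (∏ j ∈ Finset.range i, b j) * ∏ j ∈ Finset.Ico (i + 1) n, a j

/-- The second output `a'` of the affine geometric R-matrix `R : (a,b) ↦ (b',a')`. -/
noncomputable def Ra (n : ℕ) (a b : ℕ → ℂ) : ℕ → ℂ := fun j =>
  a j * energy n (cshift n a j) (cshift n b j) /
    energy n (cshift n a (j + 1)) (cshift n b (j + 1))

/-- The first output `b'` of the affine geometric R-matrix `R : (a,b) ↦ (b',a')`. -/
noncomputable def Rb (n : ℕ) (a b : ℕ → ℂ) : ℕ → ℂ := fun j =>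
  b j * energy n (cshift n a (j + 1)) (cshift n b (j + 1)) /
    energy n (cshift n a j) (cshift n b j)

open Finset in
private lemma cshift_mod (n : ℕ) (a : ℕ → ℂ) (i : ℕ) : cshift n a i = cshift n a (i % n) := by
  funext j; simp [cshift, Nat.add_mod]

private lemma cshift_succ (n : ℕ) (a : ℕ → ℂ) (i j : ℕ) :
    cshift n a (i + 1) j = cshift n a i (j + 1) := by
  simp only [cshift]; congr 2; omega

open Finset in
private lemma prod_cshift (n : ℕ) (hn : 1 ≤ n) (a : ℕ → ℂ) (i : ℕ) :
    ∏ j ∈ range n, cshift n a i j = ∏ j ∈ range n, a j := by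
  induction i with
  | zero =>
    refine Finset.prod_congr rfl fun j hj => ?_
    simp only [cshift, Nat.add_zero]
    rw [Nat.mod_eq_of_lt (mem_range.mp hj)]
  | succ i ih =>
    rw [← ih]
    obtain ⟨m, rfl⟩ : ∃ m, n = m + 1 := ⟨n - 1, by omega⟩
    have h0 : cshift (m+1) a i (m + 1) = cshift (m+1) a i 0 := by
      simp [cshift, Nat.add_mod_left]
    calc ∏ j ∈ range (m+1), cshift (m+1) a (i+1) j
        = ∏ j ∈ range (m+1), cshift (m+1) a i (j+1) := by
          exact Finset.prod_congr rfl fun j _ => cshift_succ (m+1) a i j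
      _ = (∏ j ∈ range m, cshift (m+1) a i (j+1)) * cshift (m+1) a i (m+1) :=
          Finset.prod_range_succ _ m
      _ = (∏ j ∈ range m, cshift (m+1) a i (j+1)) * cshift (m+1) a i 0 := by rw [h0]
      _ = ∏ j ∈ range (m+1), cshift (m+1) a i j := (Finset.prod_range_succ' _ m).symm

open Finset in
private lemma key_identity (n : ℕ) (hn : 1 ≤ n) (a b : ℕ → ℂ) (i : ℕ) :
    a (i % n) * energy n (cshift n a i) (cshift n b i)
      - b (i % n) * energy n (cshift n a (i + 1)) (cshift n b (i + 1))
    = (∏ j ∈ range n, a j) - ∏ j ∈ range n, b j := by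
  set A := cshift n a i with hA
  set B := cshift n b i with hB
  set F : ℕ → ℂ := fun k => (∏ j ∈ range k, B j) * ∏ j ∈ Ico (k + 1) (n + 1), A j with hF
  have hAn : A n = a (i % n) := by simp [hA, cshift, Nat.add_mod_left]
  have hB0 : B 0 = b (i % n) := by simp [hB, cshift]
  have step1 : a (i % n) * energy n A B = ∑ k ∈ range n, F k := by
    rw [energy, Finset.mul_sum]
    refine Finset.sum_congr rfl fun k hk => ?_
    have hk' : k + 1 ≤ n := by have := mem_range.mp hk; omega
    rw [hF]
    simp only
    rw [Finset.prod_Ico_succ_top hk', hAn]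
    ring
  have step2 : b (i % n) * energy n (cshift n a (i + 1)) (cshift n b (i + 1))
      = ∑ k ∈ range n, F (k + 1) := by
    rw [energy, Finset.mul_sum]
    refine Finset.sum_congr rfl fun k hk => ?_
    have hkn : k < n := mem_range.mp hk
    have e1 : ∏ j ∈ range k, cshift n b (i + 1) j = ∏ j ∈ range k, B (j + 1) :=
      Finset.prod_congr rfl fun j _ => cshift_succ n b i j
    have e2 : ∏ j ∈ Ico (k + 1) n, cshift n a (i + 1) j = ∏ j ∈ Ico (k + 2) (n + 1), A j := by
      rw [Finset.prod_Ico_eq_prod_range, Finset.prod_Ico_eq_prod_range]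
      have hc : n - (k + 1) = n + 1 - (k + 2) := by omega
      rw [← hc]
      refine Finset.prod_congr rfl fun j _ => ?_
      rw [cshift_succ n a i]
      congr 1
      omega
    rw [e1, e2, hF]
    simp only
    rw [Finset.prod_range_succ' B k, hB0]
    ring
  have tele : ∑ k ∈ range n, F k - ∑ k ∈ range n, F (k + 1) = F 0 - F n := by
    rw [← Finset.sum_sub_distrib]
    exact Finset.sum_range_sub' F n
  have hF0 : F 0 = ∏ j ∈ range n, a j := by
    rw [hF]
    simp only [Finset.range_zero, Finset.prod_empty, one_mul]
    have : ∏ j ∈ Ico 1 (n + 1), A j = ∏ j ∈ range n, A (1 + j) := by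
      rw [Finset.prod_Ico_eq_prod_range]
      simp
    rw [this, ← prod_cshift n hn a (i + 1)]
    refine Finset.prod_congr rfl fun j _ => ?_
    rw [cshift_succ n a i j, add_comm 1 j]
  have hFn : F n = ∏ j ∈ range n, b j := by
    rw [hF]
    simp only [Finset.Ico_self, Finset.prod_empty, mul_one]
    exact prod_cshift n hn b i
  rw [step1, step2, tele, hF0, hFn]

/-- Shorthand for shifted energy. -/
noncomputable def Ee (n : ℕ) (a b : ℕ → ℂ) (i : ℕ) : ℂ :=
  energy n (cshift n a i) (cshift n b i)

private lemma Ee_mod (n : ℕ) (a b : ℕ → ℂ) (i : ℕ) : Ee n a b i = Ee n a b (i % n) := by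
  unfold Ee; rw [cshift_mod n a i, cshift_mod n b i]

private lemma Ee_mod_succ (n : ℕ) (a b : ℕ → ℂ) (i : ℕ) :
    Ee n a b (i % n + 1) = Ee n a b (i + 1) := by
  rw [Ee_mod n a b (i % n + 1), Ee_mod n a b (i + 1)]
  congr 1
  simp [Nat.add_mod]

private lemma Ee_period (n : ℕ) (a b : ℕ → ℂ) (i : ℕ) : Ee n a b (i + n) = Ee n a b i := by
  rw [Ee_mod n a b (i + n), Ee_mod n a b i, Nat.add_mod_right]

open Finset in
private lemma prod_shift_one (g : ℕ → ℂ) (n : ℕ) (hn : 1 ≤ n) (hg : g n = g 0) :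
    ∏ i ∈ range n, g (i + 1) = ∏ i ∈ range n, g i := by
  obtain ⟨m, rfl⟩ : ∃ m, n = m + 1 := ⟨n - 1, by omega⟩
  rw [Finset.prod_range_succ, Finset.prod_range_succ', hg]

open Finset in
private lemma prod_ratio (g : ℕ → ℂ) (hg : ∀ j, g j ≠ 0) (m : ℕ) :
    ∏ j ∈ range m, (g (j + 1) / g j) = g m / g 0 := by
  induction m with
  | zero => simp [div_self (hg 0)]
  | succ m ih =>
    rw [Finset.prod_range_succ, ih, div_mul_div_comm, mul_comm (g 0) (g m),
      ← div_mul_div_comm, div_self (hg m), one_mul]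

open Finset in
private lemma prod_ratio' (g : ℕ → ℂ) (hg : ∀ j, g j ≠ 0) (m : ℕ) :
    ∏ j ∈ range m, (g j / g (j + 1)) = g 0 / g m := by
  induction m with
  | zero => simp [div_self (hg 0)]
  | succ m ih =>
    rw [Finset.prod_range_succ, ih, div_mul_div_comm, mul_comm (g m) (g (m + 1)),
      ← div_mul_div_comm, div_self (hg m), mul_one]

open Finset in
private lemma prod_Ra (n : ℕ) (a b : ℕ → ℂ)
    (hE : ∀ i, Ee n a b i ≠ 0) :
    ∏ j ∈ range n, Ra n a b j = ∏ j ∈ range n, a j := by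
  have h1 : ∀ j, Ra n a b j = a j * (Ee n a b j / Ee n a b (j + 1)) := fun j => by
    rw [Ra, Ee, Ee, mul_div_assoc]
  calc ∏ j ∈ range n, Ra n a b j
      = (∏ j ∈ range n, a j) * ∏ j ∈ range n, (Ee n a b j / Ee n a b (j + 1)) := by
        rw [← Finset.prod_mul_distrib]; exact Finset.prod_congr rfl fun j _ => h1 j
    _ = ∏ j ∈ range n, a j := by
        rw [prod_ratio' (Ee n a b) (fun j => hE j) n]
        have : Ee n a b n = Ee n a b 0 := by
          have := Ee_period n a b 0; rwa [zero_add] at this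
        rw [this, div_self (hE 0), mul_one]

open Finset in
private lemma prod_Rb (n : ℕ) (a b : ℕ → ℂ)
    (hE : ∀ i, Ee n a b i ≠ 0) :
    ∏ j ∈ range n, Rb n a b j = ∏ j ∈ range n, b j := by
  have h1 : ∀ j, Rb n a b j = b j * (Ee n a b (j + 1) / Ee n a b j) := fun j => by
    rw [Rb, Ee, Ee, mul_div_assoc]
  calc ∏ j ∈ range n, Rb n a b j
      = (∏ j ∈ range n, b j) * ∏ j ∈ range n, (Ee n a b (j + 1) / Ee n a b j) := by
        rw [← Finset.prod_mul_distrib]; exact Finset.prod_congr rfl fun j _ => h1 j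
    _ = ∏ j ∈ range n, b j := by
        rw [prod_ratio (Ee n a b) (fun j => hE j) n]
        have : Ee n a b n = Ee n a b 0 := by
          have := Ee_period n a b 0; rwa [zero_add] at this
        rw [this, div_self (hE 0), mul_one]

private lemma key_identity' (n : ℕ) (hn : 1 ≤ n) (a b : ℕ → ℂ) (i : ℕ) :
    a (i % n) * Ee n a b i - b (i % n) * Ee n a b (i + 1)
    = (∏ j ∈ Finset.range n, a j) - ∏ j ∈ Finset.range n, b j :=
  key_identity n hn a b i

private lemma Rb_mul (n : ℕ) (a b : ℕ → ℂ) (hE : ∀ i, Ee n a b i ≠ 0) (j : ℕ) :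
    Rb n a b j * Ee n a b j = b j * Ee n a b (j + 1) :=
  div_mul_cancel₀ _ (hE j)

private lemma Ra_mul (n : ℕ) (a b : ℕ → ℂ) (hE : ∀ i, Ee n a b i ≠ 0) (j : ℕ) :
    Ra n a b j * Ee n a b (j + 1) = a j * Ee n a b j :=
  div_mul_cancel₀ _ (hE (j + 1))

private lemma rel (n : ℕ) (hn : 1 ≤ n) (a b : ℕ → ℂ)
    (hE : ∀ i, Ee n a b i ≠ 0) (i : ℕ) :
    b (i % n) * (Ee n a b (i + 1))^2 * (Ee n (Rb n a b) (Ra n a b) i - Ee n a b i)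
      = a (i % n) * (Ee n a b i)^2 * (Ee n (Rb n a b) (Ra n a b) (i + 1) - Ee n a b (i + 1)) := by
  have h1 := key_identity' n hn a b i
  have h2 := key_identity' n hn (Rb n a b) (Ra n a b) i
  rw [prod_Rb n a b hE, prod_Ra n a b hE] at h2
  have hBm : Rb n a b (i % n) * Ee n a b i = b (i % n) * Ee n a b (i + 1) := by
    have := Rb_mul n a b hE (i % n)
    rwa [← Ee_mod, Ee_mod_succ] at this
  have hAm : Ra n a b (i % n) * Ee n a b (i + 1) = a (i % n) * Ee n a b i := by
    have := Ra_mul n a b hE (i % n)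
    rwa [← Ee_mod, Ee_mod_succ] at this
  set α := Ee n a b i
  set β := Ee n a b (i + 1)
  set α' := Ee n (Rb n a b) (Ra n a b) i
  set β' := Ee n (Rb n a b) (Ra n a b) (i + 1)
  linear_combination (α * β) * h2 + (α * β) * h1 - (β * α') * hBm + (α * β') * hAm

private lemma s_all_zero (s : ℕ → ℂ) (h : ∀ i, s i = 0 ↔ s (i + 1) = 0)
    (k : ℕ) (hk : s k = 0) : ∀ m, s m = 0 := by
  have up : ∀ d, s (k + d) = 0 := by
    intro d
    induction d with
    | zero => simpa using hk
    | succ d ih => exact (h (k + d)).mp ih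
  have down : ∀ d, s (k - d) = 0 := by
    intro d
    induction d with
    | zero => simpa using hk
    | succ d ih =>
      rcases le_or_gt k d with hkd | hdk
      · have : k - (d + 1) = k - d := by omega
        rw [this]; exact ih
      · refine (h (k - (d + 1))).mpr ?_
        have : k - (d + 1) + 1 = k - d := by omega
        rw [this]; exact ih
  intro m
  rcases le_or_gt k m with hkm | hmk
  · have : m = k + (m - k) := by omega
    rw [this]; exact up _
  · have : m = k - (k - m) := by omega
    rw [this]; exact down _

open Finset in
private lemma ratio_eq (n : ℕ) (hn : 1 ≤ n) (a b : ℕ → ℂ)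
    (ha : ∀ j, a j ≠ 0) (hb : ∀ j, b j ≠ 0)
    (hE : ∀ i, Ee n a b i ≠ 0) (i : ℕ) :
    Ee n (Rb n a b) (Ra n a b) i * Ee n a b (i + 1)
      = Ee n (Rb n a b) (Ra n a b) (i + 1) * Ee n a b i := by
  set s : ℕ → ℂ := fun i => Ee n (Rb n a b) (Ra n a b) i - Ee n a b i with hs
  have hrel : ∀ j, b (j % n) * (Ee n a b (j + 1))^2 * s j
      = a (j % n) * (Ee n a b j)^2 * s (j + 1) := fun j => rel n hn a b hE j
  have hiff : ∀ j, s j = 0 ↔ s (j + 1) = 0 := by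
    intro j
    constructor
    · intro h0
      have h1 := hrel j
      rw [h0, mul_zero] at h1
      rcases mul_eq_zero.mp h1.symm with h2 | h2
      · rcases mul_eq_zero.mp h2 with h3 | h3
        · exact absurd h3 (ha _)
        · exact absurd h3 (pow_ne_zero 2 (hE j))
      · exact h2
    · intro h0
      have h1 := hrel j
      rw [h0, mul_zero] at h1
      rcases mul_eq_zero.mp h1 with h2 | h2
      · rcases mul_eq_zero.mp h2 with h3 | h3
        · exact absurd h3 (hb _)
        · exact absurd h3 (pow_ne_zero 2 (hE (j + 1)))
      · exact h2
  by_cases hall : ∀ j, s j = 0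
  · have e1 : Ee n (Rb n a b) (Ra n a b) i = Ee n a b i := by
      have := hall i; rw [hs] at this; exact sub_eq_zero.mp this
    have e2 : Ee n (Rb n a b) (Ra n a b) (i + 1) = Ee n a b (i + 1) := by
      have := hall (i + 1); rw [hs] at this; exact sub_eq_zero.mp this
    rw [e1, e2, mul_comm]
  · push_neg at hall
    obtain ⟨k, hk⟩ := hall
    have hnz : ∀ j, s j ≠ 0 := by
      intro j hj
      exact hk (s_all_zero s hiff j hj k)
    -- product of relations over a full period gives ∏ a = ∏ b
    have hperiod : ∀ j, s (j + n) = s j := by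
      intro j; rw [hs]; simp only
      rw [Ee_period, Ee_period]
    have hEn0 : Ee n a b n = Ee n a b 0 := by
      have := Ee_period n a b 0; rwa [zero_add] at this
    have hsn0 : s n = s 0 := by
      have := hperiod 0; rwa [zero_add] at this
    have hprod : ∏ j ∈ range n, (b (j % n) * (Ee n a b (j + 1))^2 * s j)
        = ∏ j ∈ range n, (a (j % n) * (Ee n a b j)^2 * s (j + 1)) :=
      Finset.prod_congr rfl fun j _ => hrel j
    rw [Finset.prod_mul_distrib, Finset.prod_mul_distrib, Finset.prod_mul_distrib,
      Finset.prod_mul_distrib] at hprod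
    have eb : ∏ j ∈ range n, b (j % n) = ∏ j ∈ range n, b j :=
      Finset.prod_congr rfl fun j hj => by rw [Nat.mod_eq_of_lt (mem_range.mp hj)]
    have ea : ∏ j ∈ range n, a (j % n) = ∏ j ∈ range n, a j :=
      Finset.prod_congr rfl fun j hj => by rw [Nat.mod_eq_of_lt (mem_range.mp hj)]
    have eE : ∏ j ∈ range n, (Ee n a b (j + 1))^2 = ∏ j ∈ range n, (Ee n a b j)^2 := by
      exact prod_shift_one (fun j => (Ee n a b j)^2) n hn
        (show (Ee n a b n)^2 = (Ee n a b 0)^2 by rw [hEn0])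
    have es : ∏ j ∈ range n, s (j + 1) = ∏ j ∈ range n, s j := by
      exact prod_shift_one s n hn hsn0
    rw [eb, ea, eE, es] at hprod
    have hX : (∏ j ∈ range n, (Ee n a b j)^2) * ∏ j ∈ range n, s j ≠ 0 :=
      mul_ne_zero (Finset.prod_ne_zero_iff.mpr fun j _ => pow_ne_zero 2 (hE j))
        (Finset.prod_ne_zero_iff.mpr fun j _ => hnz j)
    have hPQ : ∏ j ∈ range n, a j = ∏ j ∈ range n, b j := by
      have h1 : (∏ j ∈ range n, b j) * ((∏ j ∈ range n, (Ee n a b j)^2) * ∏ j ∈ range n, s j)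
          = (∏ j ∈ range n, a j) * ((∏ j ∈ range n, (Ee n a b j)^2) * ∏ j ∈ range n, s j) := by
        rw [← mul_assoc, ← mul_assoc]; exact hprod
      exact (mul_right_cancel₀ hX h1).symm
    -- now a_i E_i = b_i E_{i+1}
    have hxy : a (i % n) * Ee n a b i = b (i % n) * Ee n a b (i + 1) := by
      have h1 := key_identity' n hn a b i
      rw [hPQ, sub_self] at h1
      exact sub_eq_zero.mp h1
    have h5 : b (i % n) * Ee n a b (i + 1) * (Ee n a b (i + 1) * s i)
        = b (i % n) * Ee n a b (i + 1) * (Ee n a b i * s (i + 1)) := by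
      linear_combination (hrel i) + (Ee n a b i * s (i + 1)) * hxy
    have h6 : Ee n a b (i + 1) * s i = Ee n a b i * s (i + 1) :=
      mul_left_cancel₀ (mul_ne_zero (hb _) (hE _)) h5
    have hsi : s i = Ee n (Rb n a b) (Ra n a b) i - Ee n a b i := rfl
    have hsi1 : s (i + 1) = Ee n (Rb n a b) (Ra n a b) (i + 1) - Ee n a b (i + 1) := rfl
    rw [hsi, hsi1] at h6
    linear_combination h6

/-- The affine geometric R-matrix is an involution: if `R(a,b) = (b',a')`
then `R(b',a') = (a,b)`, provided all relevant energies are nonzero. -/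
theorem R_matrix_involution (n : ℕ) (hn : 1 ≤ n) (a b : ℕ → ℂ)
    (ha : ∀ j, a j ≠ 0) (hb : ∀ j, b j ≠ 0)
    (hE : ∀ i, energy n (cshift n a i) (cshift n b i) ≠ 0)
    (hE' : ∀ i, energy n (cshift n (Rb n a b) i) (cshift n (Ra n a b) i) ≠ 0) :
    (∀ j, Rb n (Rb n a b) (Ra n a b) j = a j) ∧
    (∀ j, Ra n (Rb n a b) (Ra n a b) j = b j) := by
  have hE1 : ∀ i, Ee n a b i ≠ 0 := hE
  have hE2 : ∀ i, Ee n (Rb n a b) (Ra n a b) i ≠ 0 := hE'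
  have hr := ratio_eq n hn a b ha hb hE1
  constructor
  · intro j
    have hαβ := hr j
    show Ra n a b j * Ee n (Rb n a b) (Ra n a b) (j + 1) / Ee n (Rb n a b) (Ra n a b) j = a j
    rw [show Ra n a b j = a j * Ee n a b j / Ee n a b (j + 1) from rfl]
    have h1 := hE1 j; have h2 := hE1 (j + 1); have h3 := hE2 j; have h4 := hE2 (j + 1)
    field_simp
    linear_combination (-(a j)) * hαβ
  · intro j
    have hαβ := hr j
    show Rb n a b j * Ee n (Rb n a b) (Ra n a b) j / Ee n (Rb n a b) (Ra n a b) (j + 1) = b j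
    rw [show Rb n a b j = b j * Ee n a b (j + 1) / Ee n a b j from rfl]
    have h1 := hE1 j; have h2 := hE1 (j + 1); have h3 := hE2 j; have h4 := hE2 (j + 1)
    field_simp
    linear_combination (b j) * hαβ
end

section
/- Let A(x) and B(x) be n-by-n matrices over C[x] of whirl form: A(x) has diagonal entries a_1,...,a_n, entries 1 on the subdiagonal (positions (i+1,i)), entry x in position (1,n), and zeros elsewhere; similarly B(x) with diagonal b_1,...,b_n. If R(a,b) = (b',a') is the affine geometric R-matrix and B'(x), A'(x) are the whirl matrices with diagonals b', a', then A(x)B(x) = B'(x)A'(x) as matrices over C[x]. -/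
/-- The whirl matrix over `ℂ[x]` with diagonal entries `c_1,…,c_n`, subdiagonal
entries `1`, and entry `x` in position `(1,n)`. -/
noncomputable def whirl (n : ℕ) (c : ℕ → ℂ) : Matrix (Fin n) (Fin n) (Polynomial ℂ) :=
  Matrix.of fun i j =>
    if (i : ℕ) = (j : ℕ) then Polynomial.C (c i)
    else if (i : ℕ) = (j : ℕ) + 1 then 1
    else if (i : ℕ) = 0 ∧ (j : ℕ) = n - 1 then Polynomial.X
    else 0

lemma cshift_cshift (n : ℕ) (a : ℕ → ℂ) (i k : ℕ) :
    cshift n (cshift n a i) k = cshift n a (k + i) := by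
  funext j
  simp only [cshift, Nat.mod_add_mod, Nat.add_assoc]

lemma cshift_period (n : ℕ) (a : ℕ → ℂ) (i : ℕ) :
    cshift n a (i + n) = cshift n a i := by
  funext j
  simp only [cshift, ← Nat.add_assoc, Nat.add_mod_right]

lemma energy_period (n : ℕ) (a b : ℕ → ℂ) (i : ℕ) :
    energy n (cshift n a (i + n)) (cshift n b (i + n))
      = energy n (cshift n a i) (cshift n b i) := by
  rw [cshift_period, cshift_period]

lemma key1 (m : ℕ) (a b : ℕ → ℂ) :
    b 0 * energy (m+2) (cshift (m+2) a 1) (cshift (m+2) b 1)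
      = a 0 * (energy (m+2) a b - ∏ j ∈ Finset.Ico 1 (m+2), a j)
        + ∏ j ∈ Finset.range (m+2), b j := by
  have hb : ∀ i ∈ Finset.range (m+2), b 0 * ∏ j ∈ Finset.range i, cshift (m+2) b 1 j
      = ∏ j ∈ Finset.range (i+1), b j := by
    intro i hi
    rw [Finset.mem_range] at hi
    rw [Finset.prod_range_succ', mul_comm]
    congr 1
    refine Finset.prod_congr rfl fun j hj => ?_
    rw [Finset.mem_range] at hj
    simp only [cshift]
    rw [Nat.mod_eq_of_lt (by omega)]
  have ha : ∀ i ∈ Finset.range (m+1), (∏ j ∈ Finset.Ico (i+1) (m+2), cshift (m+2) a 1 j)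
      = (∏ j ∈ Finset.Ico (i+2) (m+2), a j) * a 0 := by
    intro i hi
    rw [Finset.mem_range] at hi
    rw [Finset.prod_Ico_succ_top (by omega)]
    congr 1
    · rw [Finset.prod_Ico_eq_prod_range, Finset.prod_Ico_eq_prod_range]
      rw [show m+1 - (i+1) = m+2-(i+2) by omega]
      refine Finset.prod_congr rfl fun j hj => ?_
      rw [Finset.mem_range] at hj
      simp only [cshift]
      rw [Nat.mod_eq_of_lt (by omega)]
      congr 1
      omega
    · simp only [cshift]
      rw [show m+1+1 = m+2 from rfl, Nat.mod_self]
  have hsum : energy (m+2) a b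
      = (∑ i ∈ Finset.range (m+1), (∏ j ∈ Finset.range (i+1), b j)
          * ∏ j ∈ Finset.Ico (i+1+1) (m+2), a j)
        + (∏ j ∈ Finset.range 0, b j) * ∏ j ∈ Finset.Ico 1 (m+2), a j :=
    Finset.sum_range_succ'
      (fun i => (∏ j ∈ Finset.range i, b j) * ∏ j ∈ Finset.Ico (i+1) (m+2), a j) (m+1)
  calc b 0 * energy (m+2) (cshift (m+2) a 1) (cshift (m+2) b 1)
      = ∑ i ∈ Finset.range (m+2), (b 0 * ∏ j ∈ Finset.range i, cshift (m+2) b 1 j)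
          * ∏ j ∈ Finset.Ico (i+1) (m+2), cshift (m+2) a 1 j := by
        rw [energy, Finset.mul_sum]
        exact Finset.sum_congr rfl fun i _ => by ring
    _ = ∑ i ∈ Finset.range (m+2), (∏ j ∈ Finset.range (i+1), b j)
          * ∏ j ∈ Finset.Ico (i+1) (m+2), cshift (m+2) a 1 j :=
        Finset.sum_congr rfl fun i hi => by rw [hb i hi]
    _ = (∑ i ∈ Finset.range (m+1), (∏ j ∈ Finset.range (i+1), b j)
          * ((∏ j ∈ Finset.Ico (i+2) (m+2), a j) * a 0))
        + ∏ j ∈ Finset.range (m+2), b j := by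
        rw [Finset.sum_range_succ]
        have h1 : ∑ i ∈ Finset.range (m+1), (∏ j ∈ Finset.range (i+1), b j)
            * ∏ j ∈ Finset.Ico (i+1) (m+2), cshift (m+2) a 1 j
            = ∑ i ∈ Finset.range (m+1), (∏ j ∈ Finset.range (i+1), b j)
            * ((∏ j ∈ Finset.Ico (i+2) (m+2), a j) * a 0) :=
          Finset.sum_congr rfl fun i hi => by rw [ha i hi]
        have h2 : (∏ j ∈ Finset.range (m+1+1), b j)
            * ∏ j ∈ Finset.Ico (m+1+1) (m+2), cshift (m+2) a 1 j
            = ∏ j ∈ Finset.range (m+2), b j := by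
          rw [show m+1+1 = m+2 from rfl, Finset.Ico_self, Finset.prod_empty, mul_one]
        rw [h1, h2]
    _ = a 0 * (∑ i ∈ Finset.range (m+1), (∏ j ∈ Finset.range (i+1), b j)
          * ∏ j ∈ Finset.Ico (i+1+1) (m+2), a j) + ∏ j ∈ Finset.range (m+2), b j := by
        rw [Finset.mul_sum]
        congr 1
        exact Finset.sum_congr rfl fun i _ => by ring
    _ = a 0 * (energy (m+2) a b - ∏ j ∈ Finset.Ico 1 (m+2), a j)
        + ∏ j ∈ Finset.range (m+2), b j := by
        rw [hsum, Finset.prod_range_zero, one_mul]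
        ring

lemma key2 (m : ℕ) (a b : ℕ → ℂ) :
    a (m+1) * energy (m+2) (cshift (m+2) a (m+1)) (cshift (m+2) b (m+1))
      = (∏ j ∈ Finset.range (m+2), a j)
        + b (m+1) * (energy (m+2) a b - ∏ j ∈ Finset.range (m+1), b j) := by
  have hQ0 : (∏ j ∈ Finset.Ico (0+1) (m+2), cshift (m+2) a (m+1) j)
      = ∏ j ∈ Finset.range (m+1), a j := by
    rw [Finset.prod_Ico_eq_prod_range]
    rw [show m+2-(0+1) = m+1 from rfl]
    refine Finset.prod_congr rfl fun t ht => ?_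
    rw [Finset.mem_range] at ht
    simp only [cshift]
    rw [show 1 + t + (m+1) = t + (m+2) by omega, Nat.add_mod_right,
      Nat.mod_eq_of_lt (by omega)]
  have hP : ∀ i ∈ Finset.range (m+1), (∏ j ∈ Finset.range (i+1), cshift (m+2) b (m+1) j)
      = (∏ j ∈ Finset.range i, b j) * b (m+1) := by
    intro i hi
    rw [Finset.mem_range] at hi
    rw [Finset.prod_range_succ']
    congr 1
    · refine Finset.prod_congr rfl fun j hj => ?_
      rw [Finset.mem_range] at hj
      simp only [cshift]
      rw [show j + 1 + (m+1) = j + (m+2) by omega, Nat.add_mod_right,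
        Nat.mod_eq_of_lt (by omega)]
    · simp only [cshift]
      rw [show (0:ℕ) + (m+1) = m+1 from by omega, Nat.mod_eq_of_lt (by omega)]
  have hQ : ∀ i ∈ Finset.range (m+1), (∏ j ∈ Finset.Ico (i+1+1) (m+2), cshift (m+2) a (m+1) j)
      = ∏ j ∈ Finset.Ico (i+1) (m+1), a j := by
    intro i hi
    rw [Finset.mem_range] at hi
    rw [Finset.prod_Ico_eq_prod_range, Finset.prod_Ico_eq_prod_range]
    rw [show m+2-(i+1+1) = m+1-(i+1) by omega]
    refine Finset.prod_congr rfl fun t ht => ?_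
    rw [Finset.mem_range] at ht
    simp only [cshift]
    rw [show i+1+1+t + (m+1) = (i+1+t) + (m+2) by omega, Nat.add_mod_right,
      Nat.mod_eq_of_lt (by omega)]
  have hsum : energy (m+2) a b
      = (∑ i ∈ Finset.range (m+1), (∏ j ∈ Finset.range i, b j)
          * ∏ j ∈ Finset.Ico (i+1) (m+2), a j)
        + (∏ j ∈ Finset.range (m+1), b j) * ∏ j ∈ Finset.Ico (m+1+1) (m+2), a j :=
    Finset.sum_range_succ
      (fun i => (∏ j ∈ Finset.range i, b j) * ∏ j ∈ Finset.Ico (i+1) (m+2), a j) (m+1)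
  calc a (m+1) * energy (m+2) (cshift (m+2) a (m+1)) (cshift (m+2) b (m+1))
      = a (m+1) * ((∑ i ∈ Finset.range (m+1),
            (∏ j ∈ Finset.range (i+1), cshift (m+2) b (m+1) j)
            * ∏ j ∈ Finset.Ico (i+1+1) (m+2), cshift (m+2) a (m+1) j)
          + (∏ j ∈ Finset.range 0, cshift (m+2) b (m+1) j)
            * ∏ j ∈ Finset.Ico (0+1) (m+2), cshift (m+2) a (m+1) j) := by
        rw [energy]
        rw [Finset.sum_range_succ'
          (fun i => (∏ j ∈ Finset.range i, cshift (m+2) b (m+1) j)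
            * ∏ j ∈ Finset.Ico (i+1) (m+2), cshift (m+2) a (m+1) j) (m+1)]
    _ = a (m+1) * ((∑ i ∈ Finset.range (m+1),
            ((∏ j ∈ Finset.range i, b j) * b (m+1)) * ∏ j ∈ Finset.Ico (i+1) (m+1), a j)
          + ∏ j ∈ Finset.range (m+1), a j) := by
        rw [hQ0, Finset.prod_range_zero, one_mul]
        congr 2
        refine Finset.sum_congr rfl fun i hi => ?_
        rw [hP i hi, hQ i hi]
    _ = (∑ i ∈ Finset.range (m+1), b (m+1) * ((∏ j ∈ Finset.range i, b j)
          * ∏ j ∈ Finset.Ico (i+1) (m+2), a j))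
        + ∏ j ∈ Finset.range (m+2), a j := by
        rw [mul_add, Finset.mul_sum]
        congr 1
        · refine Finset.sum_congr rfl fun i hi => ?_
          rw [Finset.mem_range] at hi
          have hh := Finset.prod_Ico_succ_top (show i+1 ≤ m+1 by omega) a
          rw [hh]
          ring
        · rw [mul_comm]
          exact (Finset.prod_range_succ a (m+1)).symm
    _ = (∏ j ∈ Finset.range (m+2), a j)
        + b (m+1) * (energy (m+2) a b - ∏ j ∈ Finset.range (m+1), b j) := by
        rw [hsum, Finset.Ico_self, Finset.prod_empty, mul_one, add_sub_cancel_right,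
          Finset.mul_sum]
        ring

lemma key0 (m : ℕ) (a b : ℕ → ℂ) :
    b 0 * energy (m+2) (cshift (m+2) a 1) (cshift (m+2) b 1)
      + a (m+1) * energy (m+2) (cshift (m+2) a (m+1)) (cshift (m+2) b (m+1))
      = (a 0 + b (m+1)) * energy (m+2) a b := by
  rw [key1, key2]
  have h1 : a 0 * ∏ j ∈ Finset.Ico 1 (m+2), a j = ∏ j ∈ Finset.range (m+2), a j := by
    rw [Finset.prod_Ico_eq_prod_range, show m+2-1 = m+1 from rfl]
    rw [Finset.prod_range_succ' a (m+1), mul_comm]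
    congr 1
    exact Finset.prod_congr rfl fun j _ => by rw [Nat.add_comm]
  have h2 : b (m+1) * ∏ j ∈ Finset.range (m+1), b j = ∏ j ∈ Finset.range (m+2), b j := by
    rw [Finset.prod_range_succ b (m+1), mul_comm]
  linear_combination - h1 - h2

lemma keyShift (n : ℕ) (hn : 2 ≤ n) (a b : ℕ → ℂ) (k : ℕ) :
    b (k % n) * energy n (cshift n a (1+k)) (cshift n b (1+k))
      + a ((n-1+k) % n) * energy n (cshift n a (n-1+k)) (cshift n b (n-1+k))
      = (a (k % n) + b ((n-1+k) % n)) * energy n (cshift n a k) (cshift n b k) := by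
  obtain ⟨m, rfl⟩ : ∃ m, n = m + 2 := ⟨n-2, by omega⟩
  have h := key0 m (cshift (m+2) a k) (cshift (m+2) b k)
  rw [cshift_cshift, cshift_cshift, cshift_cshift, cshift_cshift] at h
  rw [show m+2-1 = m+1 from rfl]
  simpa only [cshift, Nat.zero_add] using h

lemma prodId (n : ℕ) (a b : ℕ → ℂ)
    (hE : ∀ i, energy n (cshift n a i) (cshift n b i) ≠ 0) (k : ℕ) :
    a k * b k = Rb n a b k * Ra n a b k := by
  unfold Ra Rb
  have h1 := hE k
  have h2 := hE (k+1)
  field_simp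

lemma wrapId (n : ℕ) (hn : 2 ≤ n) (a b : ℕ → ℂ)
    (hE : ∀ i, energy n (cshift n a i) (cshift n b i) ≠ 0) :
    a 0 + b (n-1) = Rb n a b 0 + Ra n a b (n-1) := by
  have h := keyShift n hn a b 0
  simp only [Nat.add_zero, Nat.zero_mod] at h
  rw [Nat.mod_eq_of_lt (by omega : n-1 < n)] at h
  unfold Rb Ra
  rw [show n-1+1 = n by omega]
  have hFn : energy n (cshift n a n) (cshift n b n) = energy n (cshift n a 0) (cshift n b 0) := by
    have := energy_period n a b 0
    rwa [Nat.zero_add] at this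
  rw [hFn]
  have h0 := hE 0
  field_simp
  linear_combination -h

lemma subId (n : ℕ) (hn : 2 ≤ n) (a b : ℕ → ℂ)
    (hE : ∀ i, energy n (cshift n a i) (cshift n b i) ≠ 0)
    (k : ℕ) (h1 : 1 ≤ k) (h2 : k < n) :
    a k + b (k-1) = Rb n a b k + Ra n a b (k-1) := by
  have h := keyShift n hn a b k
  rw [Nat.mod_eq_of_lt h2] at h
  rw [show n-1+k = (k-1) + n by omega] at h
  rw [Nat.add_mod_right, Nat.mod_eq_of_lt (by omega)] at h
  rw [energy_period n a b (k-1)] at h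
  rw [Nat.add_comm 1 k] at h
  unfold Rb Ra
  rw [show k-1+1 = k by omega]
  have h0 := hE k
  field_simp
  linear_combination -h

lemma whirl_mul_apply (n : ℕ) (hn : 2 ≤ n) (c : ℕ → ℂ)
    (M : Matrix (Fin n) (Fin n) (Polynomial ℂ)) (i j : Fin n) :
    (whirl n c * M) i j = Polynomial.C (c i) * M i j +
      (if (i : ℕ) = 0 then Polynomial.X * M ⟨n-1, by omega⟩ j
       else M ⟨(i:ℕ)-1, lt_of_le_of_lt (Nat.sub_le _ _) i.isLt⟩ j) := by
  rw [Matrix.mul_apply]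
  have hdiag : whirl n c i i = Polynomial.C (c i) := by
    simp [whirl]
  rcases eq_or_ne (i : ℕ) 0 with h0 | h0
  · rw [if_pos h0]
    rw [Finset.sum_eq_add_of_mem i ⟨n-1, by omega⟩ (Finset.mem_univ _) (Finset.mem_univ _)
      (by simp only [ne_eq, Fin.ext_iff]; omega)
      (fun k _ hk => by
        obtain ⟨hk1, hk2⟩ := hk
        rw [ne_eq, Fin.ext_iff] at hk1 hk2
        simp only [Fin.val_mk] at hk2
        have : whirl n c i k = 0 := by
          simp only [whirl, Matrix.of_apply]
          rw [if_neg (by omega), if_neg (by omega), if_neg (by omega)]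
        rw [this, zero_mul])]
    rw [hdiag]
    congr 1
    have : whirl n c i ⟨n-1, by omega⟩ = Polynomial.X := by
      simp only [whirl, Matrix.of_apply, Fin.val_mk]
      rw [if_neg (by omega), if_neg (by omega), if_pos ⟨h0, by simp⟩]
    rw [this]
  · rw [if_neg h0]
    have hi := i.isLt
    rw [Finset.sum_eq_add_of_mem i ⟨(i:ℕ)-1, lt_of_le_of_lt (Nat.sub_le _ _) i.isLt⟩
      (Finset.mem_univ _) (Finset.mem_univ _)
      (by simp only [ne_eq, Fin.ext_iff, Fin.val_mk]; omega)
      (fun k _ hk => by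
        obtain ⟨hk1, hk2⟩ := hk
        rw [ne_eq, Fin.ext_iff] at hk1 hk2
        simp only [Fin.val_mk] at hk2
        have : whirl n c i k = 0 := by
          simp only [whirl, Matrix.of_apply]
          rw [if_neg (by omega), if_neg (by omega), if_neg (by omega)]
        rw [this, zero_mul])]
    rw [hdiag]
    congr 1
    have : whirl n c i ⟨(i:ℕ)-1, lt_of_le_of_lt (Nat.sub_le _ _) i.isLt⟩ = 1 := by
      simp only [whirl, Matrix.of_apply, Fin.val_mk]
      rw [if_neg (by omega), if_pos (by omega)]
    rw [this, one_mul]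

/-- If `R(a,b) = (b',a')` is the affine geometric R-matrix, then the corresponding
whirl matrices satisfy `A(x)B(x) = B'(x)A'(x)`. -/
theorem whirl_R_matrix (n : ℕ) (hn : 2 ≤ n) (a b : ℕ → ℂ)
    (ha : ∀ j, a j ≠ 0) (hb : ∀ j, b j ≠ 0)
    (hE : ∀ i, energy n (cshift n a i) (cshift n b i) ≠ 0) :
    whirl n a * whirl n b = whirl n (Rb n a b) * whirl n (Ra n a b) := by
  have hprodC : ∀ k : ℕ, Polynomial.C (a k) * Polynomial.C (b k)
      = Polynomial.C (Rb n a b k) * Polynomial.C (Ra n a b k) := fun k => by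
    rw [← Polynomial.C_mul, ← Polynomial.C_mul, prodId n a b hE k]
  have hwrapC : Polynomial.C (a 0) + Polynomial.C (b (n-1))
      = Polynomial.C (Rb n a b 0) + Polynomial.C (Ra n a b (n-1)) := by
    rw [← Polynomial.C_add, ← Polynomial.C_add, wrapId n hn a b hE]
  have hsumC : ∀ k : ℕ, 1 ≤ k → k < n → Polynomial.C (a k) + Polynomial.C (b (k-1))
      = Polynomial.C (Rb n a b k) + Polynomial.C (Ra n a b (k-1)) := fun k h1 h2 => by
    rw [← Polynomial.C_add, ← Polynomial.C_add, subId n hn a b hE k h1 h2]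
  refine Matrix.ext fun i j => ?_
  have hi := i.isLt
  have hj := j.isLt
  rw [whirl_mul_apply n hn a _ i j, whirl_mul_apply n hn (Rb n a b) _ i j]
  rcases eq_or_ne (i : ℕ) 0 with h0 | h0
  · rw [if_pos h0, if_pos h0]
    simp only [whirl, Matrix.of_apply, Fin.val_mk, h0, eq_self_iff_true, true_and, and_true]
    split_ifs
    all_goals first
        | ring1
        | (exfalso; omega)
        | (exfalso; assumption)
        | linear_combination hprodC 0
        | linear_combination Polynomial.X * hwrapC
        | skip
  · rw [if_neg h0, if_neg h0]
    simp only [whirl, Matrix.of_apply, Fin.val_mk, eq_self_iff_true, true_and, and_true]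
    split_ifs
    all_goals first
        | ring1
        | (exfalso; omega)
        | (exfalso; assumption)
        | linear_combination hprodC (i : ℕ)
        | linear_combination hsumC (i : ℕ) (by omega) (by omega)
        | skip
end

section
/- Let n >= 2, m >= 1, 1 <= k <= n, and M = gcd(n, m+k). The number of interior lattice points of the triangle in R^2 with vertices (0,n), (k,0), (k+m,0) equals ((n-1)m - M - gcd(n,k) + 2)/2, i.e., twice the number of interior lattice points equals (n-1)m - M - gcd(n,k) + 2. -/
lemma ediv_helper {n : ℤ} (hn : 0 < n) (q r : ℤ) (h0 : 0 ≤ r) (h2 : r < n) :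
    (r + q * n) / n = q := by
  rw [Int.add_mul_ediv_right _ _ hn.ne', Int.ediv_eq_zero_of_lt h0 h2, zero_add]

lemma ediv_add_neg_ediv {n : ℤ} (hn : 0 < n) (a : ℤ) :
    a / n + (-a) / n = if n ∣ a then 0 else -1 := by
  have hmod := Int.mul_ediv_add_emod a n
  have h0 : 0 ≤ a % n := Int.emod_nonneg a hn.ne'
  have h2 : a % n < n := Int.emod_lt_of_pos a hn
  by_cases hd : n ∣ a
  · obtain ⟨t, rfl⟩ := hd
    rw [Int.mul_ediv_cancel_left _ hn.ne', ← Int.mul_neg,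
      Int.mul_ediv_cancel_left _ hn.ne', if_pos ⟨t, rfl⟩]
    ring
  · have hr : a % n ≠ 0 := fun h => hd (Int.dvd_of_emod_eq_zero h)
    have ha : a = a % n + (a / n) * n := by linarith [hmod]
    have hna : -a = (n - a % n) + (-(a / n) - 1) * n := by linarith [hmod]
    rw [hna, ediv_helper hn _ _ (by omega) (by omega), if_neg hd]
    omega

lemma pred_ediv {n : ℤ} (hn : 0 < n) (a : ℤ) :
    (a - 1) / n = a / n - (if n ∣ a then 1 else 0) := by
  have hmod := Int.mul_ediv_add_emod a n
  have h0 : 0 ≤ a % n := Int.emod_nonneg a hn.ne'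
  have h2 : a % n < n := Int.emod_lt_of_pos a hn
  by_cases hd : n ∣ a
  · have hr : a % n = 0 := Int.emod_eq_zero_of_dvd hd
    have ha : a - 1 = (n - 1) + (a / n - 1) * n := by linarith
    rw [ha, ediv_helper hn _ _ (by omega) (by omega), if_pos hd]
  · have hr : a % n ≠ 0 := fun h => hd (Int.dvd_of_emod_eq_zero h)
    have ha : a - 1 = (a % n - 1) + (a / n) * n := by linarith
    rw [ha, ediv_helper hn _ _ (by omega) (by omega), if_neg hd]
    omega


lemma count_dvd_Ioo {n : ℤ} (hn : 0 < n) (c : ℤ) :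
    (((Finset.Ioo (0:ℤ) n).filter (fun j => n ∣ c * j)).card : ℤ)
      = (Int.gcd c n : ℤ) - 1 := by
  set g : ℤ := (Int.gcd c n : ℤ) with hg
  have hgN : 0 < Int.gcd c n := by
    rcases Nat.eq_zero_or_pos (Int.gcd c n) with h | h
    · rw [Int.gcd_eq_zero_iff] at h; omega
    · exact h
  have hgpos : 0 < g := by rw [hg]; exact_mod_cast hgN
  obtain ⟨d, hd⟩ : g ∣ n := Int.gcd_dvd_right c n
  obtain ⟨c', hc'⟩ : g ∣ c := Int.gcd_dvd_left c n
  have hdpos : 0 < d := by nlinarith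
  have hcop : IsCoprime d c' := by
    rw [Int.isCoprime_iff_gcd_eq_one, Int.gcd_comm]
    have := Int.gcd_div_gcd_div_gcd (i := c) (j := n) hgN
    rwa [← hg, hc', hd, Int.mul_ediv_cancel_left _ hgpos.ne',
      Int.mul_ediv_cancel_left _ hgpos.ne'] at this
  have key : (Finset.Ioo (0:ℤ) n).filter (fun j => n ∣ c * j)
      = (Finset.Ioo (0:ℤ) g).image (fun t => d * t) := by
    ext j
    simp only [Finset.mem_filter, Finset.mem_Ioo, Finset.mem_image]
    constructor
    · rintro ⟨⟨hj0, hjn⟩, s, hs⟩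
      have hdj : d ∣ j := by
        refine hcop.dvd_of_dvd_mul_left ⟨s, ?_⟩
        have : g * (c' * j) = g * (d * s) := by linear_combination hs - j * hc' + s * hd
        exact mul_left_cancel₀ hgpos.ne' this
      obtain ⟨t, rfl⟩ := hdj
      exact ⟨t, ⟨by nlinarith, by nlinarith⟩, rfl⟩
    · rintro ⟨t, ⟨ht0, htd⟩, rfl⟩
      refine ⟨⟨by positivity, by nlinarith⟩, c' * t, by rw [hc', hd]; ring⟩
  rw [key, Finset.card_image_of_injective _ (mul_right_injective₀ hdpos.ne'),
    Int.card_Ioo]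
  omega


lemma sum_ediv_Ioo {n : ℤ} (hn : 0 < n) (c : ℤ) :
    2 * ∑ j ∈ Finset.Ioo (0:ℤ) n, (c * j / n)
      = (c - 1) * (n - 1) + (Int.gcd c n : ℤ) - 1 := by
  classical
  have hrefl : ∑ j ∈ Finset.Ioo (0:ℤ) n, (c * j / n)
      = ∑ j ∈ Finset.Ioo (0:ℤ) n, (c * (n - j) / n) := by
    refine Finset.sum_nbij' (fun j => n - j) (fun j => n - j) ?_ ?_ ?_ ?_ ?_ <;>
      simp only [Finset.mem_Ioo] <;> intro a ha
    · omega
    · omega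
    · omega
    · omega
    · congr 2; omega
  have key : ∀ j ∈ Finset.Ioo (0:ℤ) n,
      c * j / n + c * (n - j) / n = (c - 1) + (if n ∣ c * j then 1 else 0) := by
    intro j _
    have h1 : c * (n - j) = -(c * j) + c * n := by ring
    rw [h1, Int.add_mul_ediv_right _ _ hn.ne']
    have h2 := ediv_add_neg_ediv hn (c * j)
    by_cases hd : n ∣ c * j <;> simp [hd] at h2 ⊢ <;> omega
  calc 2 * ∑ j ∈ Finset.Ioo (0:ℤ) n, (c * j / n)
      = ∑ j ∈ Finset.Ioo (0:ℤ) n, (c * j / n)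
        + ∑ j ∈ Finset.Ioo (0:ℤ) n, (c * (n - j) / n) := by rw [← hrefl]; ring
    _ = ∑ j ∈ Finset.Ioo (0:ℤ) n, (c * j / n + c * (n - j) / n) := by
        rw [Finset.sum_add_distrib]
    _ = ∑ j ∈ Finset.Ioo (0:ℤ) n, ((c - 1) + (if n ∣ c * j then 1 else 0)) :=
        Finset.sum_congr rfl key
    _ = (c - 1) * (n - 1) + (Int.gcd c n : ℤ) - 1 := by
        rw [Finset.sum_add_distrib, Finset.sum_const, Finset.sum_boole,
          count_dvd_Ioo hn c, Int.card_Ioo, nsmul_eq_mul]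
        have : ((n - 0 - 1).toNat : ℤ) = n - 1 := by omega
        rw [this]; ring

lemma sum_pred_ediv_Ioo {n : ℤ} (hn : 0 < n) (c : ℤ) :
    2 * ∑ j ∈ Finset.Ioo (0:ℤ) n, ((c * j - 1) / n)
      = (c - 1) * (n - 1) - (Int.gcd c n : ℤ) + 1 := by
  classical
  have : ∑ j ∈ Finset.Ioo (0:ℤ) n, ((c * j - 1) / n)
      = ∑ j ∈ Finset.Ioo (0:ℤ) n, (c * j / n)
        - ∑ j ∈ Finset.Ioo (0:ℤ) n, (if n ∣ c * j then (1:ℤ) else 0) := by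
    rw [← Finset.sum_sub_distrib]
    exact Finset.sum_congr rfl fun j _ => pred_ediv hn (c * j)
  rw [this, Finset.sum_boole, mul_sub, sum_ediv_Ioo hn c, count_dvd_Ioo hn c]
  ring


lemma tri_interior (n m k : ℕ) (hn : 2 ≤ n) (hm : 1 ≤ m) (q : ℝ × ℝ) :
    q ∈ interior (convexHull ℝ
        ({((0 : ℝ), (n : ℝ)), ((k : ℝ), (0 : ℝ)), ((k : ℝ) + (m : ℝ), (0 : ℝ))} : Set (ℝ × ℝ)))
      ↔ (0 < q.2 ∧ (n : ℝ) * k < n * q.1 + k * q.2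
          ∧ (n : ℝ) * q.1 + ((k : ℝ) + m) * q.2 < n * ((k : ℝ) + m)) := by
  have hn2 : (2 : ℝ) ≤ n := by exact_mod_cast hn
  have hn' : (0 : ℝ) < n := by linarith
  have hm' : (1 : ℝ) ≤ m := by exact_mod_cast hm
  have hm0 : (0 : ℝ) < m := by linarith
  set pts : Fin 3 → ℝ × ℝ := ![((0 : ℝ), (n : ℝ)), ((k : ℝ), (0 : ℝ)),
    ((k : ℝ) + (m : ℝ), (0 : ℝ))] with hpts
  have hind : AffineIndependent ℝ pts := by
    rw [affineIndependent_iff_not_collinear]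
    intro hc
    rw [collinear_iff_of_mem (Set.mem_range_self (0 : Fin 3))] at hc
    obtain ⟨v, hv⟩ := hc
    obtain ⟨r, hr⟩ := hv (pts 1) ⟨1, rfl⟩
    obtain ⟨t, ht⟩ := hv (pts 2) ⟨2, rfl⟩
    have hr1 := congrArg Prod.fst hr
    have hr2 := congrArg Prod.snd hr
    have ht1 := congrArg Prod.fst ht
    have ht2 := congrArg Prod.snd ht
    simp [hpts, Prod.ext_iff] at hr1 hr2 ht1 ht2
    have hb : v.2 ≠ 0 := by intro h; rw [h] at hr2; simp at hr2; linarith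
    have hrt : r = t := by
      have h0 : (r - t) * v.2 = 0 := by nlinarith [hr2, ht2]
      rcases mul_eq_zero.1 h0 with h | h
      · linarith
      · exact absurd h hb
    rw [hrt] at hr1
    nlinarith [hr1, ht1]
  have htot : affineSpan ℝ (Set.range pts) = ⊤ := by
    rw [hind.affineSpan_eq_top_iff_card_eq_finrank_add_one]
    simp
  let b : AffineBasis (Fin 3) ℝ (ℝ × ℝ) := ⟨pts, hind, htot⟩
  have hrange : Set.range (b : Fin 3 → ℝ × ℝ) =
      ({((0 : ℝ), (n : ℝ)), ((k : ℝ), (0 : ℝ)), ((k : ℝ) + (m : ℝ), (0 : ℝ))} : Set (ℝ × ℝ)) := by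
    show Set.range pts = _
    rw [hpts]
    ext x
    simp [Matrix.range_cons, Matrix.range_empty]
    tauto
  rw [← hrange, b.interior_convexHull]
  have e0 : b 0 = ((0 : ℝ), (n : ℝ)) := rfl
  have e1 : b 1 = ((k : ℝ), (0 : ℝ)) := rfl
  have e2 : b 2 = ((k : ℝ) + (m : ℝ), (0 : ℝ)) := rfl
  constructor
  · intro hq
    have hc0 : 0 < b.coord 0 q := hq 0
    have hc1 : 0 < b.coord 1 q := hq 1
    have hc2 : 0 < b.coord 2 q := hq 2
    have hw : ∑ i, b.coord i q = 1 := b.sum_coord_apply_eq_one q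
    have hcombo := b.affineCombination_coord_eq_self q
    rw [Finset.univ.affineCombination_eq_linear_combination _ _ hw] at hcombo
    rw [Fin.sum_univ_three] at hcombo hw
    rw [e0, e1, e2] at hcombo
    have h1 := congrArg Prod.fst hcombo
    have h2 := congrArg Prod.snd hcombo
    simp only [Prod.fst_add, Prod.snd_add, Prod.smul_fst, Prod.smul_snd, smul_eq_mul] at h1 h2
    refine ⟨?_, ?_, ?_⟩
    · have hy : q.2 = b.coord 0 q * n := by linarith [h2]
      rw [hy]; positivity
    · have key : (n : ℝ) * q.1 + k * q.2 - n * k = n * m * b.coord 2 q := by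
        linear_combination (-(n : ℝ)) * h1 - (k : ℝ) * h2 + (n : ℝ) * k * hw
      nlinarith [mul_pos (mul_pos hn' hm0) hc2]
    · have key : (n : ℝ) * ((k : ℝ) + m) - n * q.1 - ((k : ℝ) + m) * q.2
          = n * m * b.coord 1 q := by
        linear_combination (n : ℝ) * h1 + ((k : ℝ) + m) * h2 - (n : ℝ) * ((k : ℝ) + m) * hw
      nlinarith [mul_pos (mul_pos hn' hm0) hc1]
  · rintro ⟨h0, h1, h2⟩
    set w : Fin 3 → ℝ := ![q.2 / n,
      ((n : ℝ) * ((k : ℝ) + m) - n * q.1 - ((k : ℝ) + m) * q.2) / (n * m),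
      ((n : ℝ) * q.1 + k * q.2 - n * k) / (n * m)] with hwdef
    have hw : ∑ i, w i = 1 := by
      rw [Fin.sum_univ_three]
      show q.2 / n + _ / (n * m) + _ / (n * m) = 1
      field_simp
      ring
    have hcomb : Finset.univ.affineCombination ℝ pts w = q := by
      rw [Finset.univ.affineCombination_eq_linear_combination _ _ hw, Fin.sum_univ_three]
      show w 0 • ((0 : ℝ), (n : ℝ)) + w 1 • ((k : ℝ), (0 : ℝ))
          + w 2 • ((k : ℝ) + (m : ℝ), (0 : ℝ)) = q
      have hw0 : w 0 = q.2 / n := rfl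
      have hw1 : w 1 = ((n : ℝ) * ((k : ℝ) + m) - n * q.1 - ((k : ℝ) + m) * q.2) / (n * m) := rfl
      have hw2 : w 2 = ((n : ℝ) * q.1 + k * q.2 - n * k) / (n * m) := rfl
      apply Prod.ext <;>
        simp only [hw0, hw1, hw2, Prod.fst_add, Prod.snd_add, Prod.smul_fst, Prod.smul_snd,
          smul_eq_mul] <;> field_simp <;> ring
    intro i
    have hco : b.coord i q = w i := by
      rw [← hcomb]
      exact b.coord_apply_combination_of_mem (Finset.mem_univ i) hw
    rw [hco]
    fin_cases i
    · show 0 < w 0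
      show 0 < q.2 / n
      positivity
    · show 0 < w 1
      have hw1 : w 1 = ((n : ℝ) * ((k : ℝ) + m) - n * q.1 - ((k : ℝ) + m) * q.2) / (n * m) := rfl
      rw [hw1]
      apply div_pos (by linarith) (by positivity)
    · show 0 < w 2
      have hw2 : w 2 = ((n : ℝ) * q.1 + k * q.2 - n * k) / (n * m) := rfl
      rw [hw2]
      apply div_pos (by linarith) (by positivity)

/-- Twice the number of interior lattice points of the triangle with vertices
`(0,n)`, `(k,0)`, `(k+m,0)` equals `(n-1)m - gcd(n,m+k) - gcd(n,k) + 2`. -/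


theorem interior_lattice_points_triangle (n m k : ℕ) (hn : 2 ≤ n) (hm : 1 ≤ m)
    (hk1 : 1 ≤ k) (hk2 : k ≤ n) :
    2 * (Set.ncard {p : ℤ × ℤ |
        (((p.1 : ℝ), (p.2 : ℝ)) : ℝ × ℝ) ∈ interior (convexHull ℝ
          ({((0 : ℝ), (n : ℝ)), ((k : ℝ), (0 : ℝ)), ((k : ℝ) + (m : ℝ), (0 : ℝ))} :
            Set (ℝ × ℝ)))} : ℤ)
      = ((n : ℤ) - 1) * m - (Nat.gcd n (m + k) : ℤ) - (Nat.gcd n k : ℤ) + 2 := by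
  set N : ℤ := (n : ℤ) with hN
  set K : ℤ := (k : ℤ) with hK
  set M : ℤ := (m : ℤ) with hM
  have hNpos : 0 < N := by omega
  have hKpos : 0 < K := by omega
  have hMpos : 0 < M := by omega
  -- integer characterization
  have hchar : ∀ p : ℤ × ℤ,
      ((((p.1 : ℝ), (p.2 : ℝ)) : ℝ × ℝ) ∈ interior (convexHull ℝ
          ({((0 : ℝ), (n : ℝ)), ((k : ℝ), (0 : ℝ)), ((k : ℝ) + (m : ℝ), (0 : ℝ))} :
            Set (ℝ × ℝ))))
        ↔ (0 < p.2 ∧ p.2 < N ∧ K * (N - p.2) < N * p.1 ∧ N * p.1 < (K + M) * (N - p.2)) := by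
    intro p
    rw [tri_interior n m k hn hm]
    obtain ⟨x, y⟩ := p
    simp only
    constructor
    · rintro ⟨h0, h1, h2⟩
      have i0 : 0 < y := by exact_mod_cast h0
      have i1 : K * (N - y) < N * x := by
        rw [hK, hN]
        have hr : (k : ℝ) * ((n : ℝ) - (y : ℝ)) < (n : ℝ) * (x : ℝ) := by nlinarith [h1]
        exact_mod_cast hr
      have i2 : N * x < (K + M) * (N - y) := by
        rw [hK, hN, hM]
        have hr : (n : ℝ) * (x : ℝ) < ((k : ℝ) + (m : ℝ)) * ((n : ℝ) - (y : ℝ)) := by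
          nlinarith [h2]
        exact_mod_cast hr
      have i3 : y < N := by
        have h5 : K * (N - y) < (K + M) * (N - y) := lt_trans i1 i2
        have h6 : 0 < M * (N - y) := by nlinarith
        by_contra h
        push_neg at h
        nlinarith
      exact ⟨i0, i3, i1, i2⟩
    · rintro ⟨i0, i3, i1, i2⟩
      simp only [hK, hN, hM] at i1 i2
      have hr1 : (k : ℝ) * ((n : ℝ) - (y : ℝ)) < (n : ℝ) * (x : ℝ) := by exact_mod_cast i1
      have hr2 : (n : ℝ) * (x : ℝ) < ((k : ℝ) + (m : ℝ)) * ((n : ℝ) - (y : ℝ)) := by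
        exact_mod_cast i2
      refine ⟨by exact_mod_cast i0, by nlinarith, by nlinarith⟩
  -- the finset
  let emb : ℤ → Function.Embedding ℤ (ℤ × ℤ) :=
    fun y => ⟨fun x => (x, y), fun a b h => congrArg Prod.fst h⟩
  have emb_apply : ∀ y x : ℤ, emb y x = (x, y) := fun _ _ => rfl
  set F : Finset (ℤ × ℤ) := (Finset.Ioo (0 : ℤ) N).biUnion (fun y =>
    (Finset.Ioc ((K * (N - y)) / N) (((K + M) * (N - y) - 1) / N)).map (emb y)) with hF
  have hIoc : ∀ y x : ℤ,
      (x ∈ Finset.Ioc ((K * (N - y)) / N) (((K + M) * (N - y) - 1) / N)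
        ↔ (K * (N - y) < N * x ∧ N * x < (K + M) * (N - y))) := by
    intro y x
    rw [Finset.mem_Ioc, Int.ediv_lt_iff_lt_mul hNpos, Int.le_ediv_iff_mul_le hNpos]
    have e : x * N = N * x := mul_comm x N
    constructor
    · rintro ⟨a, b⟩; exact ⟨by linarith, by linarith⟩
    · rintro ⟨a, b⟩; exact ⟨by linarith, by linarith⟩
  have hmemF : ∀ p : ℤ × ℤ, p ∈ F ↔
      (0 < p.2 ∧ p.2 < N ∧ K * (N - p.2) < N * p.1 ∧ N * p.1 < (K + M) * (N - p.2)) := by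
    intro p
    rw [hF]
    simp only [Finset.mem_biUnion, Finset.mem_map, Finset.mem_Ioo, emb_apply]
    constructor
    · rintro ⟨y, ⟨hy0, hyN⟩, x, hx, rfl⟩
      obtain ⟨a, b⟩ := (hIoc y x).1 hx
      exact ⟨hy0, hyN, a, b⟩
    · rintro ⟨h1, h2, h3, h4⟩
      exact ⟨p.2, ⟨h1, h2⟩, p.1, (hIoc p.2 p.1).2 ⟨h3, h4⟩, rfl⟩
  have hSF : {p : ℤ × ℤ |
        (((p.1 : ℝ), (p.2 : ℝ)) : ℝ × ℝ) ∈ interior (convexHull ℝ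
          ({((0 : ℝ), (n : ℝ)), ((k : ℝ), (0 : ℝ)), ((k : ℝ) + (m : ℝ), (0 : ℝ))} :
            Set (ℝ × ℝ)))} = (F : Set (ℤ × ℤ)) := by
    ext p
    rw [Set.mem_setOf_eq, hchar p, Finset.mem_coe, hmemF p]
  rw [hSF, Set.ncard_coe_finset]
  -- disjointness and cardinality
  have hdisj : ∀ y₁ ∈ Finset.Ioo (0 : ℤ) N, ∀ y₂ ∈ Finset.Ioo (0 : ℤ) N, y₁ ≠ y₂ →
      Disjoint ((Finset.Ioc ((K * (N - y₁)) / N) (((K + M) * (N - y₁) - 1) / N)).map (emb y₁))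
        ((Finset.Ioc ((K * (N - y₂)) / N) (((K + M) * (N - y₂) - 1) / N)).map (emb y₂)) := by
    intro y₁ _ y₂ _ hne
    simp only [Finset.disjoint_left, Finset.mem_map, emb_apply]
    rintro p ⟨x, _, rfl⟩ ⟨x', _, h⟩
    exact hne (congrArg Prod.snd h).symm
  have hcard : (F.card : ℤ) = ∑ y ∈ Finset.Ioo (0 : ℤ) N,
      ((((K + M) * (N - y) - 1) / N) - (K * (N - y)) / N) := by
    rw [hF, Finset.card_biUnion hdisj]
    push_cast [Finset.card_map, Int.card_Ioc]
    refine Finset.sum_congr rfl fun y hy => ?_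
    rw [Int.toNat_of_nonneg]
    apply sub_nonneg.mpr
    apply Int.ediv_le_ediv hNpos
    rw [Finset.mem_Ioo] at hy
    nlinarith [hy.1, hy.2]
  have hre : ∑ y ∈ Finset.Ioo (0 : ℤ) N,
      ((((K + M) * (N - y) - 1) / N) - (K * (N - y)) / N)
      = ∑ j ∈ Finset.Ioo (0 : ℤ) N, ((((K + M) * j - 1) / N) - (K * j) / N) := by
    refine Finset.sum_nbij' (fun y => N - y) (fun j => N - j) ?_ ?_ ?_ ?_ ?_ <;>
      simp only [Finset.mem_Ioo] <;> intro a ha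
    · omega
    · omega
    · omega
    · omega
    · trivial
  rw [hcard, hre]
  rw [mul_comm (2 : ℤ), Finset.sum_sub_distrib, sub_mul, mul_comm _ (2:ℤ), mul_comm _ (2:ℤ),
    Finset.mul_sum, Finset.mul_sum, ← Finset.mul_sum, ← Finset.mul_sum,
    sum_pred_ediv_Ioo hNpos (K + M), sum_ediv_Ioo hNpos K]
  have g1 : (Int.gcd (K + M) N : ℤ) = (Nat.gcd n (m + k) : ℤ) := by
    have : K + M = ((k + m : ℕ) : ℤ) := by push_cast; ring
    rw [this, hN, Int.gcd_natCast_natCast, Nat.gcd_comm, Nat.add_comm k m]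
  have g2 : (Int.gcd K N : ℤ) = (Nat.gcd n k : ℤ) := by
    rw [hK, hN, Int.gcd_natCast_natCast, Nat.gcd_comm]
  rw [g1, g2]
  ring
end

section
/- Let a = (a_1,...,a_n) and b = (b_1,...,b_n) with all entries nonzero and define the energy E(a,b) = sum_{i=0}^{n-1} (prod_{j=1}^i b_j)(prod_{j=i+2}^n a_j). Then the energies of cyclic shifts satisfy the recurrence: a_{i+1} * E(a^(i), b^(i)) - b_{i+1} * E(a^(i+1), b^(i+1)) = prod_{j=1}^n a_j - prod_{j=1}^n b_j for all i (indices mod n). -/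
lemma prod_shift_one_s12 (m : ℕ) (a : ℕ → ℂ) :
    ∏ j ∈ Finset.range (m+1), a ((j+1)%(m+1)) = ∏ j ∈ Finset.range (m+1), a j := by
  rw [Finset.prod_range_succ, Finset.prod_range_succ' _ m, Nat.mod_self]
  congr 1
  apply Finset.prod_congr rfl
  intro j hj
  simp only [Finset.mem_range] at hj
  rw [Nat.mod_eq_of_lt (by omega)]

lemma prod_shift (n : ℕ) (hn : 1 ≤ n) (a : ℕ → ℂ) (i : ℕ) :
    ∏ j ∈ Finset.range n, a ((j+i)%n) = ∏ j ∈ Finset.range n, a j := by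
  obtain ⟨m, rfl⟩ := Nat.exists_eq_add_of_le hn
  induction i generalizing a with
  | zero =>
    apply Finset.prod_congr rfl
    intro j hj
    simp only [Finset.mem_range] at hj
    rw [Nat.add_zero, Nat.mod_eq_of_lt (by omega)]
  | succ i ih =>
    have step : ∀ j, a ((j+(i+1))%(1+m)) = (fun k => a ((k+1)%(1+m))) ((j+i)%(1+m)) := by
      intro j
      simp only
      rw [Nat.mod_add_mod]
      ring_nf
    calc ∏ j ∈ Finset.range (1+m), a ((j+(i+1))%(1+m))
        = ∏ j ∈ Finset.range (1+m), (fun k => a ((k+1)%(1+m))) ((j+i)%(1+m)) :=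
          Finset.prod_congr rfl (fun j _ => step j)
      _ = ∏ j ∈ Finset.range (1+m), a ((j+1)%(1+m)) := by simpa using ih (fun k => a ((k+1)%(1+m)))
      _ = ∏ j ∈ Finset.range (1+m), a j := by
          have := prod_shift_one_s12 m a
          rw [Nat.add_comm 1 m] at *
          exact this

lemma key (m : ℕ) (a b : ℕ → ℂ) :
    a 0 * energy (m+1) a b - b 0 * energy (m+1) (cshift (m+1) a 1) (cshift (m+1) b 1)
      = (∏ j ∈ Finset.range (m+1), a j) - ∏ j ∈ Finset.range (m+1), b j := by
  unfold energy cshift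
  rw [Finset.mul_sum, Finset.mul_sum, Finset.sum_range_succ' _ m, Finset.sum_range_succ]
  have hsum : ∀ i ∈ Finset.range m,
      a 0 * ((∏ j ∈ Finset.range (i+1), b j) * ∏ j ∈ Finset.Ico (i+1+1) (m+1), a j)
      = b 0 * ((∏ j ∈ Finset.range i, b ((j+1)%(m+1))) *
          ∏ j ∈ Finset.Ico (i+1) (m+1), a ((j+1)%(m+1))) := by
    intro i hi
    simp only [Finset.mem_range] at hi
    have h1 : ∏ j ∈ Finset.range i, b ((j+1)%(m+1)) = ∏ j ∈ Finset.range i, b (j+1) :=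
      Finset.prod_congr rfl (fun j hj => by
        simp only [Finset.mem_range] at hj; rw [Nat.mod_eq_of_lt (by omega)])
    have h2 : ∏ j ∈ Finset.Ico (i+1) (m+1), a ((j+1)%(m+1))
        = (∏ j ∈ Finset.Ico (i+1) m, a (j+1)) * a 0 := by
      rw [Finset.prod_Ico_succ_top (by omega), Nat.mod_self]
      congr 1
      apply Finset.prod_congr rfl
      intro j hj
      simp only [Finset.mem_Ico] at hj
      rw [Nat.mod_eq_of_lt (by omega)]
    have h3 : ∏ j ∈ Finset.Ico (i+1) m, a (j+1) = ∏ j ∈ Finset.Ico (i+1+1) (m+1), a j := by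
      rw [Finset.prod_Ico_eq_prod_range, Finset.prod_Ico_eq_prod_range]
      have : m + 1 - (i+1+1) = m - (i+1) := by omega
      rw [this]
      apply Finset.prod_congr rfl
      intro j _
      congr 1; omega
    have h4 : b 0 * ∏ j ∈ Finset.range i, b (j+1) = ∏ j ∈ Finset.range (i+1), b j := by
      rw [Finset.prod_range_succ' _ i]; ring
    rw [h1, h2, h3, ← h4]
    ring
  rw [Finset.sum_congr rfl hsum]
  have hf0 : a 0 * ((∏ j ∈ Finset.range 0, b j) * ∏ j ∈ Finset.Ico (0+1) (m+1), a j)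
      = ∏ j ∈ Finset.range (m+1), a j := by
    rw [Finset.prod_range_zero, Finset.prod_range_succ' _ m]
    rw [Finset.prod_Ico_eq_prod_range]
    simp only [Nat.add_sub_cancel, one_mul]
    rw [mul_comm]
    congr 1
    apply Finset.prod_congr rfl
    intro j _; congr 1; omega
  have hgm : b 0 * ((∏ j ∈ Finset.range m, b ((j+1)%(m+1))) *
      ∏ j ∈ Finset.Ico (m+1) (m+1), a ((j+1)%(m+1))) = ∏ j ∈ Finset.range (m+1), b j := by
    rw [Finset.Ico_self, Finset.prod_empty, mul_one, Finset.prod_range_succ' _ m]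
    have : ∏ j ∈ Finset.range m, b ((j+1)%(m+1)) = ∏ j ∈ Finset.range m, b (j+1) :=
      Finset.prod_congr rfl (fun j hj => by
        simp only [Finset.mem_range] at hj; rw [Nat.mod_eq_of_lt (by omega)])
    rw [this]; ring
  rw [hf0, hgm]
  ring

theorem energy_shift_recurrence' (n : ℕ) (hn : 1 ≤ n) (a b : ℕ → ℂ) :
    ∀ i : ℕ,
      a (i % n) * energy n (cshift n a i) (cshift n b i)
        - b (i % n) * energy n (cshift n a (i + 1)) (cshift n b (i + 1))
      = (∏ j ∈ Finset.range n, a j) - ∏ j ∈ Finset.range n, b j := by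
  intro i
  have hA1 : cshift n a (i+1) = cshift n (cshift n a i) 1 := by
    funext j; simp only [cshift]; rw [Nat.mod_add_mod]; ring_nf
  have hB1 : cshift n b (i+1) = cshift n (cshift n b i) 1 := by
    funext j; simp only [cshift]; rw [Nat.mod_add_mod]; ring_nf
  have h0a : a (i % n) = (cshift n a i) 0 := by simp [cshift]
  have h0b : b (i % n) = (cshift n b i) 0 := by simp [cshift]
  obtain ⟨m, rfl⟩ : ∃ m, n = m + 1 := ⟨n - 1, by omega⟩
  rw [h0a, h0b, hA1, hB1, key m (cshift (m+1) a i) (cshift (m+1) b i)]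
  simp only [cshift]
  rw [prod_shift (m+1) hn a i, prod_shift (m+1) hn b i]

/-- Recurrence for the energies of cyclic shifts:
`a_{i+1} E(a^{(i)},b^{(i)}) - b_{i+1} E(a^{(i+1)},b^{(i+1)}) = ∏ a_j - ∏ b_j`. -/
theorem energy_shift_recurrence (n : ℕ) (hn : 1 ≤ n) (a b : ℕ → ℂ)
    (ha : ∀ j, a j ≠ 0) (hb : ∀ j, b j ≠ 0) :
    ∀ i : ℕ,
      a (i % n) * energy n (cshift n a i) (cshift n b i)
        - b (i % n) * energy n (cshift n a (i + 1)) (cshift n b (i + 1))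
      = (∏ j ∈ Finset.range n, a j) - ∏ j ∈ Finset.range n, b j := by
  exact energy_shift_recurrence' n hn a b
end

section
/- Let n = beta*gamma, k = beta*delta with gcd(gamma,delta) = 1, 0 <= delta < gamma, and alpha = m. The map from (a,b,c) in [m] x [beta] x [gamma] sending (a,b,c) to the pair (i,j) with i = beta+1-b and j = m*delta^{-1}*c - a + 1 mod m*gamma (where delta^{-1} is the inverse of delta mod gamma, with 0 <= delta^{-1} < gamma) is a bijection onto [beta] x [m*gamma] when the j-coordinate is taken in {1,...,m*gamma} (representing values mod m*gamma). -/
/-- The re-indexing map `(a,b,c) ↦ (β+1-b, mδ⁻¹c - a + 1 mod mγ)` from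
`[m] × [β] × [γ]` to `[β] × (ℤ/mγℤ)` is a bijection. -/
theorem reindexing_bijective (m β γ δ δinv : ℕ) (hm : 1 ≤ m) (hβ : 1 ≤ β)
    (hγ : 1 ≤ γ) (hδ : δ < γ) (hgcd : Nat.gcd γ δ = 1) (hδinv : δinv < γ)
    (hinv : (δ * δinv) % γ = 1 % γ) :
    Function.Bijective (fun p : Fin m × Fin β × Fin γ =>
      ((p.2.1.rev,
        (((m : ℤ) * (δinv : ℤ) * ((p.2.2 : ℕ) + 1) - ((p.1 : ℕ) + 1) + 1 : ℤ) :
          ZMod (m * γ))) : Fin β × ZMod (m * γ))) := by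
  haveI : NeZero (m * γ) := ⟨by positivity⟩
  rw [Fintype.bijective_iff_injective_and_card]
  constructor
  · rintro ⟨a, b, c⟩ ⟨a', b', c'⟩ h
    simp only [Prod.mk.injEq] at h
    obtain ⟨hb, hj⟩ := h
    have hbb : b = b' := Fin.rev_injective hb
    rw [ZMod.intCast_eq_intCast_iff] at hj
    have hdvd : ((m * γ : ℕ) : ℤ) ∣
        ((m : ℤ) * δinv * ((c' : ℕ) + 1) - ((a' : ℕ) + 1) + 1)
          - ((m : ℤ) * δinv * ((c : ℕ) + 1) - ((a : ℕ) + 1) + 1) := hj.dvd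
    have hdvd' : (m : ℤ) * γ ∣ (m : ℤ) * δinv * ((c' : ℤ) - c) + ((a : ℤ) - a') := by
      push_cast at hdvd ⊢
      convert hdvd using 1
      ring
    -- step 1: a = a'
    have hma : (m : ℤ) ∣ (a : ℤ) - a' := by
      have h1 : (m : ℤ) ∣ (m : ℤ) * γ := ⟨γ, rfl⟩
      have h2 : (m : ℤ) ∣ (m : ℤ) * δinv * ((c' : ℤ) - c) := ⟨δinv * ((c' : ℤ) - c), by ring⟩
      have := (h1.trans hdvd').sub h2
      simpa using this
    have ha : a = a' := by
      have h3 : ((a : ℤ) - a') = 0 := by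
        refine Int.eq_zero_of_abs_lt_dvd hma ?_
        have := a.isLt; have := a'.isLt
        rw [abs_lt]
        constructor <;> [skip; skip] <;> push_cast <;> omega
      have : (a : ℤ) = a' := by omega
      exact Fin.ext (by exact_mod_cast this)
    -- step 2: c = c'
    have hγc : (γ : ℤ) ∣ (δinv : ℤ) * ((c' : ℤ) - c) := by
      have : (m : ℤ) * γ ∣ (m : ℤ) * (δinv * ((c' : ℤ) - c)) := by
        have h0 : ((a : ℤ) - a') = 0 := by
          have : (a : ℤ) = a' := by exact_mod_cast congrArg (Fin.val) ha
          omega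
        have := hdvd'
        rw [h0, add_zero] at this
        convert this using 1; ring
      exact (mul_dvd_mul_iff_left (show (m:ℤ) ≠ 0 by positivity)).mp this
    have hγδ : (γ : ℤ) ∣ 1 - (δ : ℤ) * δinv := by
      have := (Nat.ModEq.dvd (hinv : (δ * δinv) % γ = 1 % γ))
      simpa using this
    have hγcc : (γ : ℤ) ∣ (c' : ℤ) - c := by
      have h4 : (γ : ℤ) ∣ (δ : ℤ) * ((δinv : ℤ) * ((c' : ℤ) - c)) := hγc.mul_left _
      have h5 : (γ : ℤ) ∣ (1 - (δ : ℤ) * δinv) * ((c' : ℤ) - c) := hγδ.mul_right _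
      have := h4.add h5
      have e : (c' : ℤ) - c = (δ : ℤ) * ((δinv : ℤ) * ((c' : ℤ) - c)) + (1 - (δ : ℤ) * δinv) * ((c' : ℤ) - c) := by ring
      rw [e]; exact this
    have hc : c = c' := by
      have h6 : ((c' : ℤ) - c) = 0 := by
        refine Int.eq_zero_of_abs_lt_dvd hγcc ?_
        have := c.isLt; have := c'.isLt
        rw [abs_lt]
        constructor <;> push_cast <;> omega
      have : (c : ℤ) = c' := by omega
      exact Fin.ext (by exact_mod_cast this)
    rw [ha, hbb, hc]
  · simp [ZMod.card]
    ring
end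

section
/- Suppose theta_i^t (indexed by i in Z and t in Z^2) are nonzero complex numbers satisfying the octahedron recurrence a_2 * theta_{i+1}^{t+e2} * theta_i^{t+2e1} - a_1 * theta_{i+1}^{t+2e1} * theta_i^{t+e2} = c * theta_i^{t+e1+e2} * theta_{i+1}^{t+e1} for fixed nonzero constants a_1, a_2, c (where e1 = (1,0), e2 = (1,1)). Define q_{j,i}^t = K * a_j * c_{i+j-1}^t * (theta_i^{t+e_j} theta_{i-1}^{t+e_{j-1}}) / (theta_i^{t+e_{j-1}} theta_{i-1}^{t+e_j}) for j = 1,2 with e_0 = (0,0), where K is a nonzero constant and c_i^t satisfies c_i^{t+e_u} = c_{i+u}^t. Then the ratio f_i^t := (q_{2,i+1}^t - q_{1,i+1}^{t+e1}) / (q_{2,i}^{t+e1} - q_{1,i}^{t+e2}) equals 1, i.e., q_{2,i+1}^t + q_{1,i}^{t+e2} = q_{1,i+1}^{t+e1} + q_{2,i}^{t+e1}, whenever the denominator is nonzero. -/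
/-- If the theta values satisfy the octahedron recurrence, then the quantities
`q_{j,i}^t` built from them satisfy the discrete Toda-type equation
`q_{2,i+1}^t + q_{1,i}^{t+e₂} = q_{1,i+1}^{t+e₁} + q_{2,i}^{t+e₁}`. -/
theorem octahedron_implies_toda (θ : ℤ → ℤ × ℤ → ℂ) (c : ℤ → ℤ × ℤ → ℂ)
    (a1 a2 c0 K : ℂ) (ha1 : a1 ≠ 0) (ha2 : a2 ≠ 0) (hc0 : c0 ≠ 0) (hK : K ≠ 0)
    (hθ : ∀ i t, θ i t ≠ 0)
    (hshift1 : ∀ (i : ℤ) (t : ℤ × ℤ), c i (t + (1, 0)) = c (i + 1) t)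
    (hshift2 : ∀ (i : ℤ) (t : ℤ × ℤ), c i (t + (1, 1)) = c (i + 2) t)
    (hoct : ∀ (i : ℤ) (t : ℤ × ℤ),
      a2 * θ (i + 1) (t + (1, 1)) * θ i (t + (2, 0))
        - a1 * θ (i + 1) (t + (2, 0)) * θ i (t + (1, 1))
      = c0 * θ i (t + (1, 0) + (1, 1)) * θ (i + 1) (t + (1, 0)))
    (q1 q2 : ℤ → ℤ × ℤ → ℂ)
    (hq1 : ∀ (i : ℤ) (t : ℤ × ℤ), q1 i t = K * a1 * c i t *
      (θ i (t + (1, 0)) * θ (i - 1) t) / (θ i t * θ (i - 1) (t + (1, 0))))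
    (hq2 : ∀ (i : ℤ) (t : ℤ × ℤ), q2 i t = K * a2 * c (i + 1) t *
      (θ i (t + (1, 1)) * θ (i - 1) (t + (1, 0))) /
        (θ i (t + (1, 0)) * θ (i - 1) (t + (1, 1)))) :
    ∀ (i : ℤ) (t : ℤ × ℤ),
      q2 i (t + (1, 0)) - q1 i (t + (1, 1)) ≠ 0 →
      q2 (i + 1) t + q1 i (t + (1, 1)) = q1 (i + 1) (t + (1, 0)) + q2 i (t + (1, 0)) := by
  intro i t _
  have harg1 : t + (1, 1) + (1, 0) = t + (1, 0) + (1, 1) := by ring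
  have harg2 : t + (1, 0) + (1, 0) = t + (2, 0) := by rw [add_assoc]; congr 1
  have hoct1 := hoct i t
  have hoct2 := hoct (i - 1) t
  rw [show i - 1 + 1 = i by ring] at hoct2
  have h1 := hθ (i + 1) (t + (1, 0))
  have h2 := hθ i (t + (1, 1))
  have h3 := hθ i (t + (2, 0))
  have h4 := hθ (i - 1) (t + (1, 0) + (1, 1))
  have eA : q2 (i + 1) t - q1 (i + 1) (t + (1, 0)) =
      K * c (i + 2) t * c0 * θ i (t + (1, 0) + (1, 1)) * θ i (t + (1, 0)) /
        (θ i (t + (1, 1)) * θ i (t + (2, 0))) := by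
    rw [hq1, hq2, hshift1, show i + 1 + 1 = i + 2 by ring,
      show i + 1 - 1 = i by ring, harg2]
    rw [div_sub_div _ _ (mul_ne_zero h1 h2) (mul_ne_zero h1 h3),
      div_eq_div_iff (mul_ne_zero (mul_ne_zero h1 h2) (mul_ne_zero h1 h3))
        (mul_ne_zero h2 h3)]
    linear_combination (K * c (i + 2) t * θ i (t + (1, 0)) * θ (i + 1) (t + (1, 0)) *
      θ i (t + (1, 1)) * θ i (t + (2, 0))) * hoct1
  have eB : q2 i (t + (1, 0)) - q1 i (t + (1, 1)) =
      K * c (i + 2) t * c0 * θ i (t + (1, 0) + (1, 1)) * θ i (t + (1, 0)) /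
        (θ i (t + (1, 1)) * θ i (t + (2, 0))) := by
    rw [hq1, hq2, hshift1, hshift2, show i + 1 + 1 = i + 2 by ring, harg1, harg2]
    rw [div_sub_div _ _ (mul_ne_zero h3 h4) (mul_ne_zero h2 h4),
      div_eq_div_iff (mul_ne_zero (mul_ne_zero h3 h4) (mul_ne_zero h2 h4))
        (mul_ne_zero h2 h3)]
    linear_combination (K * c (i + 2) t * θ i (t + (1, 0) + (1, 1)) * θ i (t + (1, 1)) *
      θ i (t + (2, 0)) * θ (i - 1) (t + (1, 0) + (1, 1))) * hoct2
  linear_combination eA - eB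
end
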